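/- For n ≥ 3 with p = (n+2)/(n-2), one has -p ∫_{ℝⁿ} U^{p-1} Z_{n+1} dy = ((n-2)/2) ∫_{ℝⁿ} U^p dy, where Z_{n+1} = ((n-2)/2) U + ∇U·y. -/

import Mathlib

open MeasureTheory Real Set
open scoped RealInnerProductSpace

section aux

lemma my_grad_aux {E : Type*} [NormedAddCommGroup E] [InnerProductSpace ℝ E] [CompleteSpace E]
    (c α : ℝ) (y : E) :
    HasGradientAt (fun y : E => c * ((1:ℝ) + ‖y‖^2) ^ α)
      ((2 * (c * α * ((1:ℝ) + ‖y‖^2) ^ (α - 1))) • y) y := by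
  have ht : (0:ℝ) < 1 + ‖y‖^2 := by positivity
  have hd2 : HasFDerivAt (fun y : E => (1:ℝ) + ‖y‖^2) (2 • (innerSL ℝ y)) y :=
    ((hasStrictFDerivAt_norm_sq y).hasFDerivAt).const_add 1
  have hout : HasDerivAt (fun t : ℝ => c * t ^ α)
      (c * (α * ((1:ℝ) + ‖y‖^2) ^ (α - 1))) ((1:ℝ) + ‖y‖^2) := by
    have := (Real.hasDerivAt_rpow_const (x := (1:ℝ) + ‖y‖^2) (p := α) (Or.inl ht.ne')).const_mul c
    simpa using this
  have hF := hout.comp_hasFDerivAt y hd2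
  rw [hasGradientAt_iff_hasFDerivAt]
  refine hF.congr_fderiv ?_
  ext v
  simp [InnerProductSpace.toDual_apply_apply, real_inner_smul_left, real_inner_smul_right]
  ring

lemma my_cont_aux (m : ℕ) (s : ℝ) : Continuous (fun r : ℝ => r ^ m * (1 + r^2) ^ (-s)) := by
  apply Continuous.mul (continuous_pow m)
  apply Continuous.rpow_const (by continuity)
  intro r; left; positivity

lemma my_int1d (m : ℕ) (s : ℝ) (hs : (m:ℝ) + 1 < 2 * s) :
    IntegrableOn (fun r : ℝ => r ^ m * (1 + r^2) ^ (-s)) (Ioi (0:ℝ)) := by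
  have hs0 : (0:ℝ) ≤ s := by nlinarith [Nat.cast_nonneg (α := ℝ) m]
  rw [← Ioc_union_Ioi_eq_Ioi (zero_le_one (α := ℝ)), integrableOn_union]
  constructor
  · exact (my_cont_aux m s).continuousOn.integrableOn_Icc.mono_set Ioc_subset_Icc_self
  · refine ((integrableOn_Ioi_rpow_of_lt (a := (m:ℝ) - 2*s) (by linarith) zero_lt_one).mono'
      ((my_cont_aux m s).aestronglyMeasurable.restrict) ?_)
    filter_upwards [ae_restrict_mem measurableSet_Ioi] with r (hr : 1 < r)
    have hr0 : (0:ℝ) < r := by linarith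
    rw [Real.norm_eq_abs, abs_of_nonneg (by positivity)]
    have h1 : (1 + r^2) ^ (-s) ≤ (r^2) ^ (-s) :=
      rpow_le_rpow_of_nonpos (by positivity) (by linarith) (by linarith)
    calc r ^ m * (1 + r^2) ^ (-s) ≤ r ^ m * (r^2) ^ (-s) :=
          mul_le_mul_of_nonneg_left h1 (by positivity)
      _ = r ^ ((m:ℝ) - 2*s) := by
          rw [← Real.rpow_natCast r m, ← Real.rpow_natCast r 2, ← Real.rpow_mul hr0.le,
            ← Real.rpow_add hr0]
          norm_num
          ring_nf

lemma my_ftc1d (n : ℕ) (hn : 3 ≤ n) :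
    ∫ r in Ioi (0:ℝ), r ^ (n-1) * (1+r^2) ^ (-(((n:ℝ)+4)/2)) =
      (2/((n:ℝ)+2)) * ∫ r in Ioi (0:ℝ), r ^ (n-1) * (1+r^2) ^ (-(((n:ℝ)+2)/2)) := by
  set N : ℝ := (n:ℝ) with hN
  have hN3 : (3:ℝ) ≤ N := by rw [hN]; exact_mod_cast hn
  have hcast : ((n-1 : ℕ) : ℝ) = N - 1 := by
    rw [Nat.cast_sub (by omega)]; norm_num; exact hN.symm
  have hIA : IntegrableOn (fun r : ℝ => r ^ (n-1) * (1+r^2) ^ (-((N+4)/2))) (Ioi (0:ℝ)) :=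
    my_int1d (n-1) ((N+4)/2) (by rw [hcast]; linarith)
  have hIB : IntegrableOn (fun r : ℝ => r ^ (n-1) * (1+r^2) ^ (-((N+2)/2))) (Ioi (0:ℝ)) :=
    my_int1d (n-1) ((N+2)/2) (by rw [hcast]; linarith)
  have hderiv : ∀ r : ℝ, HasDerivAt (fun r : ℝ => r ^ n * (1+r^2) ^ (-((N+2)/2)))
      ((N+2) * (r ^ (n-1) * (1+r^2) ^ (-((N+4)/2))) - 2 * (r ^ (n-1) * (1+r^2) ^ (-((N+2)/2)))) r := by
    intro r
    have ht : (0:ℝ) < 1 + r^2 := by positivity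
    have hinner : HasDerivAt (fun r : ℝ => 1 + r^2) (2*r) r := by
      simpa using ((hasDerivAt_pow 2 r).const_add 1)
    have h2 : HasDerivAt (fun r : ℝ => (1+r^2) ^ (-((N+2)/2)))
        ((2*r) * (-((N+2)/2)) * (1+r^2) ^ (-((N+2)/2) - 1)) r :=
      hinner.rpow_const (Or.inl ht.ne')
    have H := (hasDerivAt_pow n r).mul h2
    refine H.congr_deriv ?_
    have e1 : (1+r^2) ^ (-((N+2)/2) - 1) = (1+r^2) ^ (-((N+4)/2)) := by congr 1; ring
    have e2 : (1+r^2) ^ (-((N+2)/2)) = (1+r^2) * (1+r^2) ^ (-((N+4)/2)) := by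
      rw [show -((N+2)/2) = 1 + -((N+4)/2) by ring, Real.rpow_add ht, Real.rpow_one]
    have e3 : r ^ n = r ^ (n-1) * r := by
      rw [← pow_succ]; congr 1; omega
    rw [e1, e2, e3, hN]
    ring
  have hcont : ContinuousWithinAt (fun r : ℝ => r ^ n * (1+r^2) ^ (-((N+2)/2))) (Ici 0) 0 :=
    (my_cont_aux n ((N+2)/2)).continuousWithinAt
  have hint : IntegrableOn (fun r : ℝ => (N+2) * (r ^ (n-1) * (1+r^2) ^ (-((N+4)/2)))
      - 2 * (r ^ (n-1) * (1+r^2) ^ (-((N+2)/2)))) (Ioi (0:ℝ)) :=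
    (hIA.const_mul _).sub (hIB.const_mul _)
  have htend : Filter.Tendsto (fun r : ℝ => r ^ n * (1+r^2) ^ (-((N+2)/2)))
      Filter.atTop (nhds 0) := by
    apply squeeze_zero' (g := fun r : ℝ => r ^ (-(2:ℝ)))
    · filter_upwards [Filter.eventually_ge_atTop (1:ℝ)] with r hr
      positivity
    · filter_upwards [Filter.eventually_gt_atTop (1:ℝ)] with r hr
      have hr0 : (0:ℝ) < r := by linarith
      have h1 : (1 + r^2) ^ (-((N+2)/2)) ≤ (r^2) ^ (-((N+2)/2)) :=
        rpow_le_rpow_of_nonpos (by positivity) (by linarith) (by linarith)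
      calc r ^ n * (1 + r^2) ^ (-((N+2)/2)) ≤ r ^ n * (r^2) ^ (-((N+2)/2)) :=
            mul_le_mul_of_nonneg_left h1 (by positivity)
        _ = r ^ (-(2:ℝ)) := by
            rw [← Real.rpow_natCast r n, ← Real.rpow_natCast r 2, ← Real.rpow_mul hr0.le,
              ← Real.rpow_add hr0]
            congr 1; push_cast; rw [hN]; ring
    · exact tendsto_rpow_neg_atTop (by norm_num)
  have hFTC := integral_Ioi_of_hasDerivAt_of_tendsto hcont (fun x _ => hderiv x) hint htend
  rw [show (0:ℝ)^n * ((1:ℝ)+(0:ℝ)^2) ^ (-((N+2)/2)) = 0 by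
    rw [zero_pow (by omega)]; ring] at hFTC
  rw [integral_sub (hIA.const_mul _) (hIB.const_mul _), integral_const_mul, integral_const_mul]
    at hFTC
  have hNe : N + 2 ≠ 0 := by linarith
  rw [div_mul_eq_mul_div, eq_div_iff hNe]
  linarith [hFTC]

lemma my_polar (n : ℕ) (hn : 3 ≤ n) (s : ℝ) :
    ∫ y : EuclideanSpace ℝ (Fin n), (1+‖y‖^2) ^ (-s) =
      ((n : ℝ) * (volume (Metric.ball (0:EuclideanSpace ℝ (Fin n)) 1)).toReal) *
        ∫ r in Ioi (0:ℝ), r ^ (n-1) * (1+r^2) ^ (-s) := by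
  haveI : NeZero n := ⟨by omega⟩
  have := integral_fun_norm_addHaar (volume : Measure (EuclideanSpace ℝ (Fin n)))
    (fun r : ℝ => (1+r^2) ^ (-s))
  simp only [finrank_euclideanSpace_fin, smul_eq_mul, nsmul_eq_mul] at this
  rw [this, measureReal_def]; ring

lemma my_ratio (n : ℕ) (hn : 3 ≤ n) :
    ∫ y : EuclideanSpace ℝ (Fin n), (1+‖y‖^2) ^ (-(((n:ℝ)+4)/2)) =
      (2/((n:ℝ)+2)) * ∫ y : EuclideanSpace ℝ (Fin n), (1+‖y‖^2) ^ (-(((n:ℝ)+2)/2)) := by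
  rw [my_polar n hn, my_polar n hn, my_ftc1d n hn]
  ring

lemma my_intnD (n : ℕ) (s : ℝ) (hs : (n:ℝ) < 2*s) :
    Integrable (fun y : EuclideanSpace ℝ (Fin n) => (1+‖y‖^2) ^ (-s)) := by
  have h := integrable_rpow_neg_one_add_norm_sq
    (E := EuclideanSpace ℝ (Fin n)) (μ := volume) (r := 2*s)
    (by rw [finrank_euclideanSpace_fin]; exact hs)
  have e : -(2*s)/2 = -s := by ring
  simpa [e] using h

end aux

theorem stmt5 (n : ℕ) (hn : 3 ≤ n)
    (p : ℝ) (hp : p = ((n : ℝ) + 2) / ((n : ℝ) - 2))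
    (U : EuclideanSpace ℝ (Fin n) → ℝ)
    (hU : ∀ y, U y = ((n : ℝ) * ((n : ℝ) - 2)) ^ (((n : ℝ) - 2) / 4) *
      (1 + ‖y‖ ^ 2) ^ (-(((n : ℝ) - 2) / 2)))
    (Z : EuclideanSpace ℝ (Fin n) → ℝ)
    (hZ : ∀ y, Z y = (((n : ℝ) - 2) / 2) * U y + ⟪gradient U y, y⟫) :
    -p * ∫ y, (U y) ^ (p - 1) * Z y =
      (((n : ℝ) - 2) / 2) * ∫ y, (U y) ^ p := by
  have hN3 : (3:ℝ) ≤ (n:ℝ) := by exact_mod_cast hn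
  have hN2 : (n:ℝ) - 2 ≠ 0 := by linarith
  set c : ℝ := ((n : ℝ) * ((n : ℝ) - 2)) ^ (((n : ℝ) - 2) / 4) with hcdef
  have hc : 0 < c := Real.rpow_pos_of_pos (by nlinarith) _
  set α : ℝ := -(((n : ℝ) - 2) / 2) with hαdef
  have hUfun : U = fun y => c * ((1:ℝ) + ‖y‖^2) ^ α := funext hU
  set fA : EuclideanSpace ℝ (Fin n) → ℝ := fun y => (1+‖y‖^2) ^ (-(((n:ℝ)+4)/2)) with hfA
  set fB : EuclideanSpace ℝ (Fin n) → ℝ := fun y => (1+‖y‖^2) ^ (-(((n:ℝ)+2)/2)) with hfB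
  have hIA : Integrable fA := my_intnD n (((n:ℝ)+4)/2) (by linarith)
  have hIB : Integrable fB := my_intnD n (((n:ℝ)+2)/2) (by linarith)
  have key1 : ∀ y, (U y) ^ (p-1) * Z y =
      ((((n:ℝ)-2)/2) * c ^ p) * (2 * fA y - fB y) := by
    intro y
    have ht : (0:ℝ) < 1 + ‖y‖^2 := by positivity
    have hgrad : ⟪gradient U y, y⟫ =
        (2 * (c * α * ((1:ℝ) + ‖y‖^2) ^ (α - 1))) * ‖y‖^2 := by
      rw [hUfun, (my_grad_aux c α y).gradient, real_inner_smul_left,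
        real_inner_self_eq_norm_sq]
    have hU1 : (U y) ^ (p-1) = c ^ (p-1) * ((1:ℝ)+‖y‖^2) ^ (-2:ℝ) := by
      rw [hU y, Real.mul_rpow hc.le (Real.rpow_nonneg ht.le _), ← Real.rpow_mul ht.le,
        show α * (p-1) = (-2:ℝ) by rw [hp, hαdef]; field_simp; ring]
    have e1 : ((1:ℝ)+‖y‖^2) ^ (-2:ℝ) * ((1:ℝ)+‖y‖^2) ^ α = fB y := by
      rw [hfB, ← Real.rpow_add ht]; congr 1; rw [hαdef]; ring
    have e2 : ((1:ℝ)+‖y‖^2) ^ (-2:ℝ) * ((1:ℝ)+‖y‖^2) ^ (α-1) = fA y := by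
      rw [hfA, ← Real.rpow_add ht]; congr 1; rw [hαdef]; ring
    have e3 : fB y = ((1:ℝ)+‖y‖^2) * fA y := by
      simp only [hfA, hfB]
      rw [show -(((n:ℝ)+2)/2) = 1 + -(((n:ℝ)+4)/2) by ring,
        Real.rpow_add ht, Real.rpow_one]
    have e4 : c ^ (p-1) * c = c ^ p := by
      rw [← Real.rpow_add_one hc.ne' (p-1)]; norm_num
    rw [hZ y, hgrad, hU1, hU y]
    rw [e3, ← e4]
    linear_combination ((((n:ℝ)-2)/2) * c * (c ^ (p-1))) * (e1.trans e3) +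
      (2 * c * α * ‖y‖^2 * (c ^ (p-1))) * e2
  have key2 : ∀ y, (U y) ^ p = c ^ p * fB y := by
    intro y
    have ht : (0:ℝ) < 1 + ‖y‖^2 := by positivity
    rw [hU y, Real.mul_rpow hc.le (Real.rpow_nonneg ht.le _), ← Real.rpow_mul ht.le,
      show α * p = -(((n:ℝ)+2)/2) by rw [hp, hαdef]; field_simp, hfB]
  have I1 : ∫ y, (U y) ^ (p-1) * Z y =
      ((((n:ℝ)-2)/2) * c ^ p) * (2 * (∫ y, fA y) - ∫ y, fB y) := by
    rw [show (fun y => (U y) ^ (p-1) * Z y) =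
        (fun y => ((((n:ℝ)-2)/2) * c ^ p) * (2 * fA y - fB y)) from funext key1]
    rw [integral_const_mul, integral_sub (hIA.const_mul 2) hIB, integral_const_mul]
  have I2 : ∫ y, (U y) ^ p = c ^ p * ∫ y, fB y := by
    rw [show (fun y => (U y) ^ p) = (fun y => c ^ p * fB y) from funext key2]
    rw [integral_const_mul]
  have hrat : ∫ y, fA y = (2/((n:ℝ)+2)) * ∫ y, fB y := my_ratio n hn
  rw [I1, I2, hrat, hp]
  have hNe : (n:ℝ) + 2 ≠ 0 := by linarith
  field_simp
  ring
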